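/- Let (A, μ, Δ, α, c, R) be a quasi-triangular Hom-bialgebra. Then R satisfies the second quantum Hom-Yang-Baxter equation R₁₂ (R₁₃ R₂₃) = (R₂₃ R₁₃) R₁₂ in A ⊗ A ⊗ A, where R₁₂ = R ⊗ c, R₂₃ = c ⊗ R, R₁₃ = (τ ⊗ Id)(R₂₃). -/
import Mathlib


open TensorProduct

variable {k : Type*} [CommRing k] {A : Type*} [AddCommGroup A] [Module k A]

/-- Componentwise product on `A ⊗ A` induced by a bilinear multiplication `μ`. -/
noncomputable def mulT2 (μ : A →ₗ[k] A →ₗ[k] A) (X Y : A ⊗[k] A) : A ⊗[k] A :=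
  ((TensorProduct.map (TensorProduct.lift μ) (TensorProduct.lift μ)) ∘ₗ
    (TensorProduct.tensorTensorTensorComm k A A A A).toLinearMap) (X ⊗ₜ[k] Y)

/-- Componentwise product on `(A ⊗ A) ⊗ A` induced by `μ`. -/
noncomputable def mulT3 (μ : A →ₗ[k] A →ₗ[k] A) (X Y : (A ⊗[k] A) ⊗[k] A) :
    (A ⊗[k] A) ⊗[k] A :=
  ((TensorProduct.map
      ((TensorProduct.map (TensorProduct.lift μ) (TensorProduct.lift μ)) ∘ₗ
        (TensorProduct.tensorTensorTensorComm k A A A A).toLinearMap)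
      (TensorProduct.lift μ)) ∘ₗ
    (TensorProduct.tensorTensorTensorComm k (A ⊗[k] A) A (A ⊗[k] A) A).toLinearMap)
    (X ⊗ₜ[k] Y)

/-- `R₁₂ = R ⊗ c`. -/
noncomputable def R12e (c : A) (R : A ⊗[k] A) : (A ⊗[k] A) ⊗[k] A := R ⊗ₜ[k] c

/-- `R₂₃ = c ⊗ R`. -/
noncomputable def R23e (c : A) (R : A ⊗[k] A) : (A ⊗[k] A) ⊗[k] A :=
  (TensorProduct.assoc k A A A).symm (c ⊗ₜ[k] R)

/-- `R₁₃ = (τ ⊗ Id)(R₂₃)`. -/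
noncomputable def R13e (c : A) (R : A ⊗[k] A) : (A ⊗[k] A) ⊗[k] A :=
  TensorProduct.map (TensorProduct.comm k A A).toLinearMap LinearMap.id (R23e c R)

lemma mulT2_tmul (μ : A →ₗ[k] A →ₗ[k] A) (a b a' b' : A) :
    mulT2 μ (a ⊗ₜ[k] b) (a' ⊗ₜ[k] b') = μ a a' ⊗ₜ[k] μ b b' := by
  simp [mulT2]

lemma mulT3_tmul (μ : A →ₗ[k] A →ₗ[k] A) (X Y : A ⊗[k] A) (z w : A) :
    mulT3 μ (X ⊗ₜ[k] z) (Y ⊗ₜ[k] w) = mulT2 μ X Y ⊗ₜ[k] μ z w := by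
  simp [mulT3, mulT2]

lemma mulT2_add_left (μ : A →ₗ[k] A →ₗ[k] A) (X X' Y : A ⊗[k] A) :
    mulT2 μ (X + X') Y = mulT2 μ X Y + mulT2 μ X' Y := by
  simp [mulT2, TensorProduct.add_tmul]

lemma mulT2_add_right (μ : A →ₗ[k] A →ₗ[k] A) (X Y Y' : A ⊗[k] A) :
    mulT2 μ X (Y + Y') = mulT2 μ X Y + mulT2 μ X Y' := by
  simp [mulT2, TensorProduct.tmul_add]

lemma mulT2_zero_left (μ : A →ₗ[k] A →ₗ[k] A) (Y : A ⊗[k] A) :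
    mulT2 μ 0 Y = 0 := by
  simp [mulT2, TensorProduct.zero_tmul]

lemma mulT2_zero_right (μ : A →ₗ[k] A →ₗ[k] A) (X : A ⊗[k] A) :
    mulT2 μ X 0 = 0 := by
  simp [mulT2, TensorProduct.tmul_zero]

lemma mulT3_add_left (μ : A →ₗ[k] A →ₗ[k] A) (X X' Y : (A ⊗[k] A) ⊗[k] A) :
    mulT3 μ (X + X') Y = mulT3 μ X Y + mulT3 μ X' Y := by
  simp [mulT3, TensorProduct.add_tmul]

lemma mulT3_add_right (μ : A →ₗ[k] A →ₗ[k] A) (X Y Y' : (A ⊗[k] A) ⊗[k] A) :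
    mulT3 μ X (Y + Y') = mulT3 μ X Y + mulT3 μ X Y' := by
  simp [mulT3, TensorProduct.tmul_add]

lemma mulT3_zero_left (μ : A →ₗ[k] A →ₗ[k] A) (Y : (A ⊗[k] A) ⊗[k] A) :
    mulT3 μ 0 Y = 0 := by
  simp [mulT3, TensorProduct.zero_tmul]

lemma mulT3_zero_right (μ : A →ₗ[k] A →ₗ[k] A) (X : (A ⊗[k] A) ⊗[k] A) :
    mulT3 μ X 0 = 0 := by
  simp [mulT3, TensorProduct.tmul_zero]

lemma comm_comm_apply (X : A ⊗[k] A) :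
    (TensorProduct.comm k A A) ((TensorProduct.comm k A A) X) = X := by
  induction X using TensorProduct.induction_on with
  | zero => simp
  | add x x' hx hx' => simp [hx, hx']
  | tmul a b => simp

lemma mulT2_comm_comm (μ : A →ₗ[k] A →ₗ[k] A) (X Y : A ⊗[k] A) :
    (TensorProduct.comm k A A) (mulT2 μ X Y)
      = mulT2 μ ((TensorProduct.comm k A A) X) ((TensorProduct.comm k A A) Y) := by
  induction X using TensorProduct.induction_on with
  | zero => simp [mulT2_zero_left]
  | add x x' hx hx' => simp [mulT2_add_left, hx, hx']
  | tmul a b =>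
      induction Y using TensorProduct.induction_on with
      | zero => simp [mulT2_zero_right]
      | add y y' hy hy' => simp [mulT2_add_right, hy, hy']
      | tmul a' b' => simp [mulT2_tmul]

/-- `τ ⊗ Id` on `(A ⊗ A) ⊗ A`. -/
noncomputable def flipF : (A ⊗[k] A) ⊗[k] A →ₗ[k] (A ⊗[k] A) ⊗[k] A :=
  TensorProduct.map (TensorProduct.comm k A A).toLinearMap LinearMap.id

lemma flipF_tmul (x : A ⊗[k] A) (z : A) :
    flipF (x ⊗ₜ[k] z) = ((TensorProduct.comm k A A) x) ⊗ₜ[k] z := by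
  simp [flipF]

lemma flipF_mulT3 (μ : A →ₗ[k] A →ₗ[k] A) (X Y : (A ⊗[k] A) ⊗[k] A) :
    flipF (mulT3 μ X Y) = mulT3 μ (flipF X) (flipF Y) := by
  induction X using TensorProduct.induction_on with
  | zero => simp [mulT3_zero_left]
  | add x x' hx hx' => simp [mulT3_add_left, hx, hx']
  | tmul x z =>
      induction Y using TensorProduct.induction_on with
      | zero => simp [mulT3_zero_right]
      | add y y' hy hy' => simp [mulT3_add_right, hy, hy']
      | tmul y w =>
          rw [mulT3_tmul, flipF_tmul, flipF_tmul, flipF_tmul, mulT3_tmul]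
          exact congrArg (· ⊗ₜ[k] μ z w) (mulT2_comm_comm μ x y)

lemma flipF_flipF (X : (A ⊗[k] A) ⊗[k] A) : flipF (flipF X) = X := by
  induction X using TensorProduct.induction_on with
  | zero => simp
  | add x x' hx hx' => simp [hx, hx']
  | tmul x z => rw [flipF_tmul, flipF_tmul, comm_comm_apply]

lemma flipF_R23e (c : A) (R : A ⊗[k] A) : flipF (R23e c R) = R13e c R := rfl

lemma flipF_R13e (c : A) (R : A ⊗[k] A) : flipF (R13e c R) = R23e c R := by
  rw [← flipF_R23e, flipF_flipF]

lemma flipF_map_Δα (Δ : A →ₗ[k] A ⊗[k] A) (α : A →ₗ[k] A) (R : A ⊗[k] A) :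
    flipF (TensorProduct.map Δ α R)
      = TensorProduct.map ((TensorProduct.comm k A A).toLinearMap ∘ₗ Δ) α R := by
  induction R using TensorProduct.induction_on with
  | zero => simp
  | add x y hx hy => simp [hx, hy]
  | tmul a b => simp [flipF]

/-- In a quasi-triangular Hom-bialgebra `(A, μ, Δ, α, c, R)`, the element `R`
satisfies the second quantum Hom-Yang-Baxter equation `R₁₂ (R₁₃ R₂₃) = (R₂₃ R₁₃) R₁₂`. -/
theorem quantum_hom_yang_baxter_second
    (μ : A →ₗ[k] A →ₗ[k] A) (Δ : A →ₗ[k] A ⊗[k] A) (α : A →ₗ[k] A) (c : A) (R : A ⊗[k] A)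
    (hαμ : ∀ x y : A, α (μ x y) = μ (α x) (α y))
    (hassoc : ∀ x y z : A, μ (μ x y) (α z) = μ (α x) (μ y z))
    (hαΔ : Δ ∘ₗ α = TensorProduct.map α α ∘ₗ Δ)
    (hcoassoc : (TensorProduct.assoc k A A A).toLinearMap ∘ₗ TensorProduct.map Δ α ∘ₗ Δ
      = TensorProduct.map α Δ ∘ₗ Δ)
    (hcompat : ∀ x y : A, Δ (μ x y) = mulT2 μ (Δ x) (Δ y))
    (hcl : ∀ x : A, μ c x = α x) (hcr : ∀ x : A, μ x c = α x)
    (hR1 : TensorProduct.map Δ α R = mulT3 μ (R13e c R) (R23e c R))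
    (hR2 : (TensorProduct.assoc k A A A).symm (TensorProduct.map α Δ R)
      = mulT3 μ (R13e c R) (R12e c R))
    (hR3 : ∀ x : A, mulT2 μ ((TensorProduct.comm k A A) (Δ x)) R = mulT2 μ R (Δ x)) :
    mulT3 μ (R12e c R) (mulT3 μ (R13e c R) (R23e c R))
      = mulT3 μ (mulT3 μ (R23e c R) (R13e c R)) (R12e c R) := by

  have key : ∀ S : A ⊗[k] A,
      mulT3 μ (R ⊗ₜ[k] c) (TensorProduct.map Δ α S)
        = mulT3 μ (TensorProduct.map ((TensorProduct.comm k A A).toLinearMap ∘ₗ Δ) α S)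
            (R ⊗ₜ[k] c) := by
    intro S
    induction S using TensorProduct.induction_on with
    | zero => simp [mulT3_zero_left, mulT3_zero_right]
    | add x y hx hy => simp [mulT3_add_left, mulT3_add_right, hx, hy]
    | tmul s t =>
        simp only [TensorProduct.map_tmul, LinearMap.comp_apply, LinearEquiv.coe_coe]
        rw [mulT3_tmul, mulT3_tmul, hR3 s, hcl, hcr]
  have hflip : mulT3 μ (R23e c R) (R13e c R)
      = TensorProduct.map ((TensorProduct.comm k A A).toLinearMap ∘ₗ Δ) α R := by
    have h1 : mulT3 μ (R23e c R) (R13e c R)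
        = flipF (mulT3 μ (R13e c R) (R23e c R)) := by
      rw [flipF_mulT3, flipF_R13e, flipF_R23e]
    rw [h1, ← hR1, flipF_map_Δα]
  rw [← hR1, hflip]
  exact key R
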